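/- Let A and A' be r×r symmetrizable weak generalized Cartan matrices with a common right symmetrizer D (a positive integer diagonal matrix with AD and A'D symmetric). Let N = 2I − A, N' = 2I − A', and set A₊ = (1+z²)I − zN, A₋ = (1+z²)I − zN'. Then A₊ D A₋† = A₋ D A₊† (with A† = (A|_{z↦z⁻¹})ᵀ) if and only if AA' = A'A. -/

import Mathlib

open LaurentPolynomial Matrix

/-- The `†` operation: substitute `z ↦ z⁻¹` in each entry, then transpose. -/
noncomputable def dagger {r : ℕ} (A : Matrix (Fin r) (Fin r) (LaurentPolynomial ℤ)) :
    Matrix (Fin r) (Fin r) (LaurentPolynomial ℤ) :=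
  (A.map (LaurentPolynomial.invert (R := ℤ))).transpose

/-- The entrywise coercion of an integer matrix into matrices over `ℤ[z,z⁻¹]`. -/
noncomputable def intMat {r : ℕ} (A : Matrix (Fin r) (Fin r) ℤ) :
    Matrix (Fin r) (Fin r) (LaurentPolynomial ℤ) :=
  A.map fun x => (x : LaurentPolynomial ℤ)

/-- `A₊ = (1+z²)I − zN` where `N = 2I − A`, as a matrix over `ℤ[z,z⁻¹]`. -/
noncomputable def cartanPlus {r : ℕ} (A : Matrix (Fin r) (Fin r) ℤ) :
    Matrix (Fin r) (Fin r) (LaurentPolynomial ℤ) :=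
  (1 + T 2 : LaurentPolynomial ℤ) • (1 : Matrix (Fin r) (Fin r) (LaurentPolynomial ℤ))
    - (T 1 : LaurentPolynomial ℤ) • intMat ((2 : ℤ) • (1 : Matrix (Fin r) (Fin r) ℤ) - A)

lemma castC (n : ℤ) : ((n : LaurentPolynomial ℤ)) = C n :=
  (map_intCast (C : ℤ →+* LaurentPolynomial ℤ) n).symm

lemma Cinj : Function.Injective (C : ℤ → LaurentPolynomial ℤ) := fun a b h => by
  have h0 := congrArg (fun f : LaurentPolynomial ℤ => f.coeff 0) h
  simpa only [LaurentPolynomial.C_apply, if_pos rfl, if_true] using h0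

lemma intMat_apply {r : ℕ} (X : Matrix (Fin r) (Fin r) ℤ) (i j : Fin r) :
    intMat X i j = C (X i j) := by
  rw [intMat, Matrix.map_apply, castC]

lemma intMat_inj {r : ℕ} : Function.Injective (intMat (r := r)) := fun X Y h => by
  ext i j
  have := congrFun (congrFun h i) j
  rw [intMat_apply, intMat_apply] at this
  exact Cinj this

lemma intMat_mul {r : ℕ} (X Y : Matrix (Fin r) (Fin r) ℤ) :
    intMat (X * Y) = intMat X * intMat Y :=
  Matrix.map_mul (f := Int.castRingHom (LaurentPolynomial ℤ))

lemma intMat_transpose {r : ℕ} (X : Matrix (Fin r) (Fin r) ℤ) :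
    (intMat X)ᵀ = intMat Xᵀ := (Matrix.transpose_map).symm

lemma intMat_diagonal {r : ℕ} (d : Fin r → ℤ) :
    intMat (Matrix.diagonal d) = Matrix.diagonal fun i => C (d i) := by
  ext i j
  rw [intMat_apply]
  rcases eq_or_ne i j with h | h
  · subst h; simp
  · simp [Matrix.diagonal_apply_ne _ h]

lemma dagger_cartanPlus {r : ℕ} (B : Matrix (Fin r) (Fin r) ℤ) :
    dagger (cartanPlus B)
      = (1 + T (-2) : LaurentPolynomial ℤ) • (1 : Matrix (Fin r) (Fin r) (LaurentPolynomial ℤ))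
        - (T (-1) : LaurentPolynomial ℤ) • (intMat ((2 : ℤ) • (1 : Matrix (Fin r) (Fin r) ℤ) - B))ᵀ := by
  unfold dagger cartanPlus
  ext i j
  simp only [Matrix.transpose_apply, Matrix.map_apply, Matrix.sub_apply, Matrix.smul_apply,
    intMat_apply, smul_eq_mul, map_sub, _root_.map_mul, map_add, _root_.map_one,
    _root_.map_ofNat, invert_T, invert_C]
  rcases eq_or_ne i j with h | h
  · subst h; simp
  · simp [Matrix.one_apply_ne h, Matrix.one_apply_ne (Ne.symm h)]


lemma aux_expand {n : ℕ} {R : Type*} [CommRing R] (P Q D' : Matrix (Fin n) (Fin n) R)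
    (p p' q q' : R) (hQ : D' * Qᵀ = Q * D') (hqq : q * q' = 1) :
    (p • (1 : Matrix (Fin n) (Fin n) R) - q • P) * D' * (p' • 1 - q' • Qᵀ)
      = (p * p') • D' - (p * q') • (Q * D') - (q * p') • (P * D') + P * (Q * D') := by
  simp only [Matrix.sub_mul, Matrix.mul_sub, Matrix.smul_mul, Matrix.mul_smul,
    Matrix.one_mul, Matrix.mul_one, smul_smul, smul_sub, Matrix.mul_assoc, hQ]
  rw [show q' * q = 1 from by rw [mul_comm]; exact hqq, one_smul]
  module

theorem stmt5 (r : ℕ) (A A' : Matrix (Fin r) (Fin r) ℤ)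
    (d : Fin r → ℤ) (hd : ∀ i, 0 < d i)
    -- `A` and `A'` are symmetrizable weak generalized Cartan matrices:
    (hdiag : ∀ a, A a a ≤ 2) (hdiag' : ∀ a, A' a a ≤ 2)
    (hoff : ∀ a b, a ≠ b → A a b ≤ 0) (hoff' : ∀ a b, a ≠ b → A' a b ≤ 0)
    -- with common right symmetrizer `D = diag d`:
    (hsym : (A * Matrix.diagonal d).transpose = A * Matrix.diagonal d)
    (hsym' : (A' * Matrix.diagonal d).transpose = A' * Matrix.diagonal d) :
    cartanPlus A * (Matrix.diagonal fun i => LaurentPolynomial.C (d i)) * dagger (cartanPlus A')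
      = cartanPlus A' * (Matrix.diagonal fun i => LaurentPolynomial.C (d i)) * dagger (cartanPlus A)
    ↔ A * A' = A' * A := by
  classical
  have hD : (Matrix.diagonal fun i => C (d i))
      = intMat (Matrix.diagonal d) := (intMat_diagonal d).symm
  -- symmetrizer facts over ℤ
  have symInt : ∀ X : Matrix (Fin r) (Fin r) ℤ, (X * Matrix.diagonal d)ᵀ = X * Matrix.diagonal d →
      Matrix.diagonal d * ((2 : ℤ) • (1 : Matrix (Fin r) (Fin r) ℤ) - X)ᵀ
        = ((2 : ℤ) • (1 : Matrix (Fin r) (Fin r) ℤ) - X) * Matrix.diagonal d := by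
    intro X hX
    have h1 : Matrix.diagonal d * Xᵀ = X * Matrix.diagonal d := by
      nth_rewrite 1 [← Matrix.diagonal_transpose]
      rw [← Matrix.transpose_mul, hX]
    rw [Matrix.transpose_sub, Matrix.transpose_smul, Matrix.transpose_one,
      Matrix.mul_sub, Matrix.sub_mul, h1, Matrix.mul_smul, Matrix.smul_mul,
      Matrix.mul_one, Matrix.one_mul]
  have symL : ∀ X : Matrix (Fin r) (Fin r) ℤ, (X * Matrix.diagonal d)ᵀ = X * Matrix.diagonal d →
      (Matrix.diagonal fun i => C (d i))
          * (intMat ((2 : ℤ) • (1 : Matrix (Fin r) (Fin r) ℤ) - X))ᵀ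
        = intMat ((2 : ℤ) • (1 : Matrix (Fin r) (Fin r) ℤ) - X)
          * (Matrix.diagonal fun i => C (d i)) := by
    intro X hX
    rw [hD, intMat_transpose, ← intMat_mul, ← intMat_mul, symInt X hX]
  -- expansion of the triple product
  have expand : ∀ X Y : Matrix (Fin r) (Fin r) ℤ,
      (Y * Matrix.diagonal d)ᵀ = Y * Matrix.diagonal d →
      cartanPlus X * (Matrix.diagonal fun i => C (d i)) * dagger (cartanPlus Y)
        = ((1 + T 2) * (1 + T (-2)) : LaurentPolynomial ℤ) • (Matrix.diagonal fun i => C (d i))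
          - ((T 1 + T (-1)) : LaurentPolynomial ℤ) •
              (intMat ((2 : ℤ) • (1 : Matrix (Fin r) (Fin r) ℤ) - Y)
                * (Matrix.diagonal fun i => C (d i)))
          - ((T 1 + T (-1)) : LaurentPolynomial ℤ) •
              (intMat ((2 : ℤ) • (1 : Matrix (Fin r) (Fin r) ℤ) - X)
                * (Matrix.diagonal fun i => C (d i)))
          + intMat (((2 : ℤ) • (1 : Matrix (Fin r) (Fin r) ℤ) - X)
              * ((2 : ℤ) • (1 : Matrix (Fin r) (Fin r) ℤ) - Y) * Matrix.diagonal d) := by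
    intro X Y hY
    have hsymy := symL Y hY
    have hT : (T 1 : LaurentPolynomial ℤ) * T (-1) = 1 := by
      rw [← T_add]; norm_num
    have e1 : ((1 + T 2 : LaurentPolynomial ℤ) * T (-1)) = T 1 + T (-1) := by
      rw [add_mul, one_mul, ← T_add]; norm_num [add_comm]
    have e2 : ((T 1 : LaurentPolynomial ℤ) * (1 + T (-2))) = T 1 + T (-1) := by
      rw [mul_add, mul_one, ← T_add]; norm_num
    rw [dagger_cartanPlus, cartanPlus,
      aux_expand (intMat ((2 : ℤ) • (1 : Matrix (Fin r) (Fin r) ℤ) - X))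
        (intMat ((2 : ℤ) • (1 : Matrix (Fin r) (Fin r) ℤ) - Y))
        (Matrix.diagonal fun i => C (d i)) _ _ _ _ hsymy hT,
      e1, e2]
    congr 1
    rw [hD, ← intMat_mul, ← intMat_mul, ← Matrix.mul_assoc]
  have h5 : ((2 : ℤ) • (1 : Matrix (Fin r) (Fin r) ℤ) - A)
        * ((2 : ℤ) • (1 : Matrix (Fin r) (Fin r) ℤ) - A')
      - ((2 : ℤ) • (1 : Matrix (Fin r) (Fin r) ℤ) - A')
        * ((2 : ℤ) • (1 : Matrix (Fin r) (Fin r) ℤ) - A)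
      = A * A' - A' * A := by
    simp only [Matrix.sub_mul, Matrix.mul_sub, Matrix.smul_mul, Matrix.mul_smul,
      Matrix.one_mul, Matrix.mul_one, smul_smul]
    abel
  rw [expand A A' hsym', expand A' A hsym]
  constructor
  · intro h
    rw [sub_right_comm] at h
    have h2 := add_left_cancel h
    have h3 := intMat_inj h2
    have h4 : ((2 : ℤ) • (1 : Matrix (Fin r) (Fin r) ℤ) - A)
          * ((2 : ℤ) • (1 : Matrix (Fin r) (Fin r) ℤ) - A')
        = ((2 : ℤ) • (1 : Matrix (Fin r) (Fin r) ℤ) - A')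
          * ((2 : ℤ) • (1 : Matrix (Fin r) (Fin r) ℤ) - A) := by
      ext i j
      have := congrFun (congrFun h3 i) j
      rw [Matrix.mul_diagonal, Matrix.mul_diagonal] at this
      exact mul_right_cancel₀ (ne_of_gt (hd j)) this
    rw [← sub_eq_zero, ← h5, sub_eq_zero]
    exact h4
  · intro h
    have h4 : ((2 : ℤ) • (1 : Matrix (Fin r) (Fin r) ℤ) - A)
          * ((2 : ℤ) • (1 : Matrix (Fin r) (Fin r) ℤ) - A')
        = ((2 : ℤ) • (1 : Matrix (Fin r) (Fin r) ℤ) - A')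
          * ((2 : ℤ) • (1 : Matrix (Fin r) (Fin r) ℤ) - A) := by
      rw [← sub_eq_zero, h5, sub_eq_zero]; exact h
    rw [sub_right_comm, h4]
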